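/- Let A be a monoid and let A^op be its opposite monoid (same carrier, with operation x +_op y := y + x). Then for every subset X of A, γ_A(X) = γ_{A^op}(X), i.e., the Cauchy–Davenport constant of X computed in A equals the Cauchy–Davenport constant of (the image of) X computed in A^op. -/

import Mathlib

open Pointwise

/-- The order of `z`: the cardinality (in `ℕ∞`) of the subsemigroup
`{z, z+z, z+z+z, …}` generated by `z`. -/
noncomputable def ord {A : Type*} [AddSemigroup A] (z : A) : ℕ∞ :=
  ((AddSubsemigroup.closure {z} : AddSubsemigroup A) : Set A).encard

/-- The Cauchy–Davenport constant of a subset `X` of a monoid: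
`γ(X) = sup_{x₀ ∈ X^×} inf_{x ∈ X, x ≠ x₀} ord (x + (-x₀))`. -/
noncomputable def gamma {A : Type*} [AddMonoid A] (X : Set A) : ℕ∞ :=
  ⨆ (u : AddUnits A) (_ : (u : A) ∈ X),
    ⨅ (x : A) (_ : x ∈ X ∧ x ≠ (u : A)), ord (x + ((-u : AddUnits A) : A))

/-- `ord` is preserved by injective (non-unital) additive homomorphisms. -/
lemma ord_addHom {A B : Type*} [AddSemigroup A] [AddSemigroup B] (f : A →ₙ+ B)
    (hf : Function.Injective f) (z : A) : ord (f z) = ord z := by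
  unfold ord
  have h : AddSubsemigroup.closure {f z} = (AddSubsemigroup.closure {z}).map f := by
    rw [AddHom.map_mclosure, Set.image_singleton]
  rw [h, AddSubsemigroup.coe_map, hf.encard_image]

/-- `ord` is preserved by `AddOpposite.op`. -/
lemma ord_op {A : Type*} [AddSemigroup A] (z : A) : ord (AddOpposite.op z) = ord z := by
  unfold ord
  have h : ((AddSubsemigroup.closure {AddOpposite.op z} : AddSubsemigroup (AddOpposite A)) : Set _)
      = AddOpposite.op '' ((AddSubsemigroup.closure {z} : AddSubsemigroup A) : Set A) := by
    apply le_antisymm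
    · have : AddSubsemigroup.closure {AddOpposite.op z} ≤
        { carrier := AddOpposite.op '' (AddSubsemigroup.closure {z} : AddSubsemigroup A),
          add_mem' := fun ha hb => by
            obtain ⟨a, ha, rfl⟩ := ha
            obtain ⟨b, hb, rfl⟩ := hb
            exact ⟨b + a, add_mem hb ha, rfl⟩ } := by
        apply AddSubsemigroup.closure_le.2
        rintro _ rfl
        exact ⟨z, AddSubsemigroup.subset_closure rfl, rfl⟩
      exact this
    · rintro _ ⟨a, ha, rfl⟩
      induction ha using AddSubsemigroup.closure_induction with
      | mem x hx => rw [Set.mem_singleton_iff] at hx; subst hx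
                    exact AddSubsemigroup.subset_closure rfl
      | add x y _ _ hx hy =>
          rw [show AddOpposite.op (x + y) = AddOpposite.op y + AddOpposite.op x from rfl]
          exact add_mem hy hx
  rw [h, AddOpposite.op_injective.encard_image]

/-- Conjugation by a unit as a non-unital additive hom. -/
def conjHom {A : Type*} [AddMonoid A] (u : AddUnits A) : A →ₙ+ A where
  toFun w := ↑u + w + ↑(-u)
  map_add' a b := by
    have : (↑u + a + ↑(-u)) + (↑u + b + ↑(-u)) = ↑u + (a + (↑(-u) + ↑u) + b) + ↑(-u) := by
      simp only [add_assoc]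
    rw [this, AddUnits.neg_add, add_zero]

lemma conjHom_injective {A : Type*} [AddMonoid A] (u : AddUnits A) :
    Function.Injective (conjHom u) := by
  intro a b h
  have : ∀ w : A, ↑(-u) + (conjHom u w) + ↑u = w := by
    intro w
    show ↑(-u) + (↑u + w + ↑(-u)) + ↑u = w
    have : ↑(-u) + (↑u + w + ↑(-u)) + ↑u = (↑(-u) + ↑u) + w + (↑(-u) + ↑u) := by
      simp only [add_assoc]
    rw [this, AddUnits.neg_add, zero_add, add_zero]
  rw [← this a, ← this b, h]

lemma ord_conj {A : Type*} [AddMonoid A] (u : AddUnits A) (z : A) :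
    ord (↑u + z + ↑(-u)) = ord z :=
  ord_addHom (conjHom u) (conjHom_injective u) z

lemma ord_neg_add {A : Type*} [AddMonoid A] (u : AddUnits A) (x : A) :
    ord ((↑(-u) : A) + x) = ord (x + ↑(-u)) := by
  have h : ↑u + ((↑(-u) : A) + x) + ↑(-u) = x + ↑(-u) := by
    rw [← add_assoc, AddUnits.add_neg, zero_add]
  rw [← h, ord_conj]

/-- Units of `A` correspond to units of `Aᵃᵒᵖ`. -/
def unitsOpEquiv {A : Type*} [AddMonoid A] : AddUnits A ≃ AddUnits (AddOpposite A) where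
  toFun u := ⟨AddOpposite.op ↑u, AddOpposite.op ↑(-u),
    by rw [show AddOpposite.op (u : A) + AddOpposite.op ((-u : AddUnits A) : A)
            = AddOpposite.op (↑(-u) + ↑u) from rfl, AddUnits.neg_add]; rfl,
    by rw [show AddOpposite.op ((-u : AddUnits A) : A) + AddOpposite.op (u : A)
            = AddOpposite.op (↑u + ↑(-u)) from rfl, AddUnits.add_neg]; rfl⟩
  invFun v := ⟨AddOpposite.unop ↑v, AddOpposite.unop ↑(-v),
    by rw [show AddOpposite.unop (v : AddOpposite A) + AddOpposite.unop ((-v : AddUnits _) : AddOpposite A)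
            = AddOpposite.unop (↑(-v) + ↑v) from rfl, AddUnits.neg_add]; rfl,
    by rw [show AddOpposite.unop ((-v : AddUnits _) : AddOpposite A) + AddOpposite.unop (v : AddOpposite A)
            = AddOpposite.unop (↑v + ↑(-v)) from rfl, AddUnits.add_neg]; rfl⟩
  left_inv u := by ext; rfl
  right_inv v := by ext; rfl

theorem stmt13 {A : Type*} [AddMonoid A] (X : Set A) :
    gamma X = gamma (AddOpposite.op '' X) := by
  unfold gamma
  refine (unitsOpEquiv (A := A)).iSup_congr fun u => ?_
  have hu : ((unitsOpEquiv u : AddUnits (AddOpposite A)) : AddOpposite A) ∈ AddOpposite.op '' X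
      ↔ (u : A) ∈ X := AddOpposite.op_injective.mem_set_image
  simp only [hu]
  refine iSup_congr fun _ => ?_
  refine ((AddOpposite.opEquiv (α := A)).iInf_congr fun x => ?_).symm
  have hx : ((AddOpposite.opEquiv x : AddOpposite A) ∈ AddOpposite.op '' X ∧
      (AddOpposite.opEquiv x : AddOpposite A) ≠
        ((unitsOpEquiv u : AddUnits (AddOpposite A)) : AddOpposite A))
      ↔ (x ∈ X ∧ x ≠ (u : A)) := by
    constructor
    · rintro ⟨h1, h2⟩
      exact ⟨AddOpposite.op_injective.mem_set_image.1 h1, fun h => h2 (by rw [h]; rfl)⟩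
    · rintro ⟨h1, h2⟩
      exact ⟨⟨x, h1, rfl⟩, fun h => h2 (AddOpposite.op_injective h)⟩
  simp only [hx]
  refine iInf_congr fun _ => ?_
  rw [show ((AddOpposite.opEquiv x : AddOpposite A) +
      ((-(unitsOpEquiv u) : AddUnits (AddOpposite A)) : AddOpposite A))
      = AddOpposite.op (((-u : AddUnits A) : A) + x) from rfl, ord_op, ord_neg_add]
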